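/- Under Assumption 1 (unconfoundedness) and Assumption 2 (MAR), for each d ∈ {0,1}, assuming P(D = 1−d, R = 1) > 0 and P(D = d, R = 1 | X) > 0 almost surely, for every η ∈ ℝ: P(V_d < η | D = 1−d, R = 1) = E[ P(V_d < η | X, D = d, R = 1) | D = 1−d, R = 1 ]. In particular, if η_{α,d} is chosen so that the right-hand side equals 1 − α, then P(V_d < η_{α,d} | D = 1−d, R = 1) = 1 − α. -/

import Mathlib

open MeasureTheory ProbabilityTheory MeasurableSpace
open scoped ENNReal

section Aux

variable {Ω : Type*}

lemma comap_pair_eq {β γ : Type*} [mβ : MeasurableSpace β] [mγ : MeasurableSpace γ]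
    (f : Ω → β) (g : Ω → γ) :
    MeasurableSpace.comap (fun ω => (f ω, g ω)) inferInstance
      = MeasurableSpace.comap f mβ ⊔ MeasurableSpace.comap g mγ := by
  refine le_antisymm ?_ (sup_le ?_ ?_)
  · exact Measurable.comap_le (Measurable.prodMk
      ((comap_measurable f).mono le_sup_left le_rfl)
      ((comap_measurable g).mono le_sup_right le_rfl))
  · exact Measurable.comap_le (measurable_fst.comp (comap_measurable _))
  · exact Measurable.comap_le (measurable_snd.comp (comap_measurable _))

lemma mul_indicator_one_eq' (f : Ω → ℝ) (s : Set Ω) :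
    f * s.indicator (fun _ => (1:ℝ)) = s.indicator f :=
  funext fun ω => by by_cases h : ω ∈ s <;> simp [h]

lemma integral_indicator_one'' {mΩ : MeasurableSpace Ω} (μ : Measure Ω) {s : Set Ω}
    (hs : MeasurableSet s) :
    ∫ x, s.indicator (fun _ => (1:ℝ)) x ∂μ = (μ s).toReal :=
  integral_indicator_one hs


lemma indicator_one_nonneg {Ω : Type*} (s : Set Ω) : 0 ≤ s.indicator (fun _ => (1:ℝ)) :=
  fun ω => Set.indicator_nonneg (fun _ _ => zero_le_one) ω

lemma condexp_indicator_nonneg (m : MeasurableSpace Ω) {mΩ : MeasurableSpace Ω}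
    (μ : Measure Ω) (s : Set Ω) :
    0 ≤ᵐ[μ] μ⟦s|m⟧ :=
  condExp_nonneg (Filter.Eventually.of_forall (indicator_one_nonneg s))

lemma condexp_indicator_le_one {m : MeasurableSpace Ω} {mΩ : MeasurableSpace Ω} (hm : m ≤ mΩ)
    (μ : Measure Ω) [IsProbabilityMeasure μ] (s : Set Ω) (hs : MeasurableSet s) :
    ∀ᵐ ω ∂μ, (μ⟦s|m⟧) ω ≤ 1 := by
  have hi : Integrable (s.indicator fun _ => (1:ℝ)) μ := (integrable_const (1:ℝ)).indicator hs
  have h := condExp_mono (μ := μ) (m := m) hi (integrable_const (1:ℝ))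
    (Filter.Eventually.of_forall (fun ω => Set.indicator_le_self' (fun _ _ => zero_le_one) ω))
  have hc := condExp_const (m := m) (m₀ := mΩ) (μ := μ) hm (1:ℝ)
  filter_upwards [h] with ω hω
  rw [hc] at hω
  exact hω

lemma condexp_indicator_abs_le_one {m : MeasurableSpace Ω} {mΩ : MeasurableSpace Ω} (hm : m ≤ mΩ)
    (μ : Measure Ω) [IsProbabilityMeasure μ] (s : Set Ω) (hs : MeasurableSet s) :
    ∀ᵐ ω ∂μ, ‖(μ⟦s|m⟧) ω‖ ≤ 1 := by
  filter_upwards [condexp_indicator_le_one hm μ s hs, condexp_indicator_nonneg m μ s] with ω h1 h2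
  rw [Real.norm_eq_abs, abs_of_nonneg h2]; exact h1

lemma condexp_indicator_inter {m : MeasurableSpace Ω} {mΩ : MeasurableSpace Ω} (hm : m ≤ mΩ)
    (μ : Measure Ω) [IsProbabilityMeasure μ] {s u : Set Ω} (hs : MeasurableSet[m] s)
    (hu : MeasurableSet u) :
    μ⟦s ∩ u|m⟧ =ᵐ[μ] fun ω => s.indicator (fun _ => (1:ℝ)) ω * (μ⟦u|m⟧) ω := by
  have h1 : (s ∩ u).indicator (fun _ => (1:ℝ)) = s.indicator (u.indicator fun _ => (1:ℝ)) :=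
    (Set.indicator_indicator _ _ _).symm
  have hi : Integrable (u.indicator fun _ => (1:ℝ)) μ := (integrable_const (1:ℝ)).indicator hu
  have h2 := condExp_indicator (m := m) (μ := μ) hi hs
  rw [show μ⟦s ∩ u|m⟧ = μ[(s ∩ u).indicator (fun _ => (1:ℝ))|m] from rfl, h1]
  filter_upwards [h2] with ω hω
  rw [hω]
  by_cases h : ω ∈ s <;> simp [h]
/-- π-system of intersections of sets of two σ-algebras. -/
def interSets (m₁ m₂ : MeasurableSpace Ω) : Set (Set Ω) :=
  {U | ∃ t s, MeasurableSet[m₁] t ∧ MeasurableSet[m₂] s ∧ U = t ∩ s}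

lemma isPiSystem_interSets (m₁ m₂ : MeasurableSpace Ω) : IsPiSystem (interSets m₁ m₂) := by
  rintro U ⟨t, s, ht, hs, rfl⟩ U' ⟨t', s', ht', hs', rfl⟩ -
  exact ⟨t ∩ t', s ∩ s', ht.inter ht', hs.inter hs', by rw [Set.inter_inter_inter_comm]⟩

lemma sup_eq_generateFrom_interSets (m₁ m₂ : MeasurableSpace Ω) :
    m₁ ⊔ m₂ = MeasurableSpace.generateFrom (interSets m₁ m₂) := by
  refine le_antisymm (sup_le ?_ ?_) (generateFrom_le ?_)
  · intro t ht
    exact measurableSet_generateFrom ⟨t, Set.univ, ht, MeasurableSet.univ, (Set.inter_univ t).symm⟩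
  · intro s hs
    exact measurableSet_generateFrom ⟨Set.univ, s, MeasurableSet.univ, hs, (Set.univ_inter s).symm⟩
  · rintro U ⟨t, s, ht, hs, rfl⟩
    exact ((le_sup_left : m₁ ≤ m₁ ⊔ m₂) t ht).inter ((le_sup_right : m₂ ≤ m₁ ⊔ m₂) s hs)

lemma interSets_measurable {m₁ m₂ : MeasurableSpace Ω} {mΩ : MeasurableSpace Ω}
    (h₁ : m₁ ≤ mΩ) (h₂ : m₂ ≤ mΩ) : ∀ U ∈ interSets m₁ m₂, MeasurableSet U := by
  rintro U ⟨t, s, ht, hs, rfl⟩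
  exact (h₁ t ht).inter (h₂ s hs)

/-- Augmentation: if `m₁ ⟂ m₂ | m'` then `(m' ⊔ m₁) ⟂ m₂ | m'`. -/
lemma CondIndep.sup_left' {m' m₁ m₂ : MeasurableSpace Ω} {mΩ : MeasurableSpace Ω}
    [StandardBorelSpace Ω] {hm' : m' ≤ mΩ} {μ : Measure Ω} [IsProbabilityMeasure μ]
    (hm₁ : m₁ ≤ mΩ) (hm₂ : m₂ ≤ mΩ)
    (h : CondIndep m' m₁ m₂ hm' μ) :
    CondIndep m' (m' ⊔ m₁) m₂ hm' μ := by
  rw [condIndep_iff _ _ _ _ hm₁ hm₂] at h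
  refine CondIndepSets.condIndep (sup_le hm' hm₁) hm₂ (isPiSystem_interSets m' m₁)
    (fun s hs t ht _ => MeasurableSet.inter hs ht) (sup_eq_generateFrom_interSets m' m₁)
    (@generateFrom_measurableSet Ω m₂).symm ?_
  refine (condIndepSets_iff m' hm' _ _ (interSets_measurable hm' hm₁) (fun s hs => hm₂ s hs) μ).mpr ?_
  rintro U t2 ⟨t, s, ht, hs, rfl⟩ ht2
  have e1 : (t ∩ s) ∩ t2 = t ∩ (s ∩ t2) := Set.inter_assoc t s t2
  have h2 := condexp_indicator_inter hm' μ ht ((hm₁ s hs).inter (hm₂ t2 ht2))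
  have h3 := condexp_indicator_inter hm' μ ht (hm₁ s hs)
  have h4 := h s t2 hs ht2
  rw [e1]
  filter_upwards [h2, h3, h4] with ω e2 e3 e4
  rw [Pi.mul_apply, e3, e2, e4, Pi.mul_apply]
  ring
lemma condexp_indicator_sup_of_condIndep {m mD m₁ : MeasurableSpace Ω} {mΩ : MeasurableSpace Ω}
    [StandardBorelSpace Ω] (hm : m ≤ mΩ) (hmD : mD ≤ mΩ) (hm₁ : m₁ ≤ mΩ)
    {μ : Measure Ω} [IsProbabilityMeasure μ]
    (hCI : CondIndep m m₁ mD hm μ) {s : Set Ω} (hs : MeasurableSet[m₁] s) :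
    μ[Set.indicator s (fun _ => (1:ℝ))|m ⊔ mD] =ᵐ[μ] μ⟦s|m⟧ := by
  have hm2 : m ⊔ mD ≤ mΩ := sup_le hm hmD
  have hsm : MeasurableSet s := hm₁ s hs
  have hCI' := (condIndep_iff m m₁ mD hm hm₁ hmD μ).mp hCI
  set h : Ω → ℝ := μ⟦s|m⟧ with hh
  have hint : Integrable h μ := integrable_condExp
  have hnn : 0 ≤ᵐ[μ] h := condexp_indicator_nonneg m μ s
  have hsm' : StronglyMeasurable[m] h := stronglyMeasurable_condExp
  have hmeas_h : Measurable h := (hsm'.mono hm).measurable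
  set w : Ω → ℝ≥0∞ := fun ω => ENNReal.ofReal (h ω) with hw
  have hw_meas : Measurable w := hmeas_h.ennreal_ofReal
  have q_def : ∀ r : Set Ω, True := fun _ => trivial
  -- core computation on the π-system
  have core : ∀ t r, MeasurableSet[m] t → MeasurableSet[mD] r →
      μ.withDensity w (t ∩ r) = μ.restrict s (t ∩ r) := by
    intro t r ht hr
    have htm : MeasurableSet t := hm t ht
    have hrm : MeasurableSet r := hmD r hr
    have h1r : Integrable (r.indicator fun _ => (1:ℝ)) μ := (integrable_const _).indicator hrm
    have e' : h * (r.indicator fun _ => (1:ℝ)) = r.indicator h := mul_indicator_one_eq' h r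
    have hfg : Integrable (h * (r.indicator fun _ => (1:ℝ))) μ := by
      rw [e']; exact hint.indicator hrm
    have hq : μ[r.indicator h|m] =ᵐ[μ] fun ω => h ω * (μ⟦r|m⟧) ω := by
      have := condExp_mul_of_stronglyMeasurable_left (μ := μ) hsm' hfg h1r
      rw [e'] at this
      exact this
    -- LHS chain
    have lhs1 : μ.withDensity w (t ∩ r) = ENNReal.ofReal (∫ x in t ∩ r, h x ∂μ) := by
      rw [withDensity_apply _ (htm.inter hrm),
        ofReal_integral_eq_lintegral_ofReal hint.integrableOn (ae_restrict_of_ae hnn)]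
    have lhs2 : ∫ x in t ∩ r, h x ∂μ = ∫ x in t, r.indicator h x ∂μ := by
      rw [Set.inter_comm t r, ← Measure.restrict_restrict hrm, integral_indicator hrm]
    have lhs3 : ∫ x in t, r.indicator h x ∂μ = ∫ x in t, h x * (μ⟦r|m⟧) x ∂μ := by
      rw [← setIntegral_condExp hm (show Integrable (r.indicator h) μ from hint.indicator hrm) ht]
      exact integral_congr_ae (ae_restrict_of_ae hq)
    -- RHS chain
    have hsr : MeasurableSet (s ∩ r) := hsm.inter hrm
    have rhs1 : μ.restrict s (t ∩ r) = μ ((s ∩ r) ∩ t) := by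
      rw [Measure.restrict_apply (htm.inter hrm)]
      congr 1
      ext ω; simp only [Set.mem_inter_iff]; tauto
    have rhs2 : (μ ((s ∩ r) ∩ t)).toReal = ∫ x in t, (s ∩ r).indicator (fun _ => (1:ℝ)) x ∂μ := by
      rw [integral_indicator_one'' (μ.restrict t) hsr, Measure.restrict_apply hsr]
    have rhs3 : ∫ x in t, (s ∩ r).indicator (fun _ => (1:ℝ)) x ∂μ
        = ∫ x in t, (μ⟦s ∩ r|m⟧) x ∂μ :=
      (setIntegral_condExp hm ((integrable_const _).indicator hsr) ht).symm
    have rhs4 : ∫ x in t, (μ⟦s ∩ r|m⟧) x ∂μ = ∫ x in t, h x * (μ⟦r|m⟧) x ∂μ := by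
      refine integral_congr_ae (ae_restrict_of_ae ?_)
      filter_upwards [hCI' s r hs hr] with ω hω
      rw [hω, Pi.mul_apply]
    rw [lhs1, lhs2, lhs3, rhs1, ← ENNReal.ofReal_toReal (measure_ne_top μ _), rhs2, rhs3, rhs4]
  -- finite measure instances
  haveI hfinwd : IsFiniteMeasure (μ.withDensity w) := by
    refine isFiniteMeasure_withDensity ?_
    rw [← ofReal_integral_eq_lintegral_ofReal hint hnn]
    exact ENNReal.ofReal_ne_top
  -- trim equality
  have htrim : (μ.withDensity w).trim hm2 = (μ.restrict s).trim hm2 := by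
    refine ext_of_generate_finite (interSets m mD)
      (sup_eq_generateFrom_interSets m mD) (isPiSystem_interSets m mD) ?_ ?_
    · rintro U ⟨t, r, ht, hr, rfl⟩
      have hU : MeasurableSet[m ⊔ mD] (t ∩ r) :=
        ((le_sup_left : m ≤ m ⊔ mD) t ht).inter ((le_sup_right : mD ≤ m ⊔ mD) r hr)
      rw [trim_measurableSet_eq hm2 hU, trim_measurableSet_eq hm2 hU]
      exact core t r ht hr
    · rw [trim_measurableSet_eq hm2 MeasurableSet.univ, trim_measurableSet_eq hm2 MeasurableSet.univ]
      have := core Set.univ Set.univ MeasurableSet.univ MeasurableSet.univ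
      simpa using this
  -- key set-integral equality
  have key : ∀ U : Set Ω, MeasurableSet[m ⊔ mD] U → μ U < ⊤ →
      ∫ x in U, h x ∂μ = ∫ x in U, s.indicator (fun _ => (1:ℝ)) x ∂μ := by
    intro U hU _
    have hUm : MeasurableSet U := hm2 U hU
    have h1 : ENNReal.ofReal (∫ x in U, h x ∂μ) = μ.withDensity w U := by
      rw [withDensity_apply _ hUm,
        ofReal_integral_eq_lintegral_ofReal hint.integrableOn (ae_restrict_of_ae hnn)]
    have h2 : μ.withDensity w U = μ.restrict s U := by
      have e1 := trim_measurableSet_eq hm2 hU (μ := μ.withDensity w)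
      have e2 := trim_measurableSet_eq hm2 hU (μ := μ.restrict s)
      rw [← e1, ← e2, htrim]
    have h3 : ∫ x in U, s.indicator (fun _ => (1:ℝ)) x ∂μ = (μ.restrict s U).toReal := by
      rw [integral_indicator_one'' (μ.restrict U) hsm, Measure.restrict_apply hsm,
        Measure.restrict_apply hUm, Set.inter_comm]
    rw [h3, ← h2, ← h1, ENNReal.toReal_ofReal]
    exact integral_nonneg_of_ae (ae_restrict_of_ae hnn)
  exact (ae_eq_condExp_of_forall_setIntegral_eq hm2 ((integrable_const (1:ℝ)).indicator hsm)
      (fun _ _ _ => hint.integrableOn) key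
      ((hsm'.mono (le_sup_left : m ≤ m ⊔ mD)).aestronglyMeasurable (μ := μ))).symm


-- placeholders for already-proven lemmas
lemma star_lemma {m mY mD mR m2 : MeasurableSpace Ω} {mΩ : MeasurableSpace Ω}
    [StandardBorelSpace Ω] (hm : m ≤ mΩ) (hmY : mY ≤ mΩ) (hmD : mD ≤ mΩ) (hmR : mR ≤ mΩ)
    (hm2eq : m2 = m ⊔ mD) {hm2 : m2 ≤ mΩ}
    (μ : Measure Ω) [IsProbabilityMeasure μ]
    (h1 : CondIndep m (m ⊔ mY) mD hm μ)
    (h2 : CondIndep m2 (m2 ⊔ mY) mR hm2 μ)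
    {s t u : Set Ω} (hs : MeasurableSet[m ⊔ mY] s) (ht : MeasurableSet[mD] t)
    (hu : MeasurableSet[mR] u) :
    μ⟦s ∩ (t ∩ u)|m⟧ =ᵐ[μ] fun ω => (μ⟦s|m⟧) ω * (μ⟦t ∩ u|m⟧) ω := by
  subst hm2eq
  have hm2' : m ⊔ mD ≤ mΩ := sup_le hm hmD
  have hmY2 : m ⊔ mY ≤ mΩ := sup_le hm hmY
  have hsm : MeasurableSet s := hmY2 s hs
  have htm : MeasurableSet t := hmD t ht
  have hum : MeasurableSet u := hmR u hu
  -- (d) reduction of conditioning σ-algebra by A1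
  have hd : μ[s.indicator (fun _ => (1:ℝ))|m ⊔ mD] =ᵐ[μ] μ⟦s|m⟧ :=
    condexp_indicator_sup_of_condIndep hm hmD hmY2 h1 hs
  -- (b) MAR factorization
  have hst_mem : MeasurableSet[(m ⊔ mD) ⊔ mY] (s ∩ t) := by
    have h1' : m ⊔ mY ≤ (m ⊔ mD) ⊔ mY :=
      sup_le ((le_sup_left : m ≤ m ⊔ mD).trans le_sup_left) le_sup_right
    have h2' : mD ≤ (m ⊔ mD) ⊔ mY := (le_sup_right : mD ≤ m ⊔ mD).trans le_sup_left
    exact (h1' s hs).inter (h2' t ht)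
  have hb := (condIndep_iff (m ⊔ mD) ((m ⊔ mD) ⊔ mY) mR hm2' (sup_le hm2' hmY) hmR μ).mp
    h2 (s ∩ t) u hst_mem hu
  -- (c) pulling out the t-indicator at level m ⊔ mD
  have htmem2 : MeasurableSet[m ⊔ mD] t := (le_sup_right : mD ≤ m ⊔ mD) t ht
  have hc1 := condexp_indicator_inter hm2' μ htmem2 hsm
  have hc2 := condexp_indicator_inter hm2' μ htmem2 hum
  -- middle identity at level m ⊔ mD
  have hmid : μ⟦s ∩ (t ∩ u)|m ⊔ mD⟧ =ᵐ[μ] μ⟦s|m⟧ * μ⟦t ∩ u|m ⊔ mD⟧ := by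
    rw [show s ∩ (t ∩ u) = (s ∩ t) ∩ u from (Set.inter_assoc s t u).symm,
      show s ∩ t = t ∩ s from Set.inter_comm s t,
      show t ∩ u = t ∩ u from rfl]
    have hb' : μ⟦(t ∩ s) ∩ u|m ⊔ mD⟧ =ᵐ[μ] μ⟦t ∩ s|m ⊔ mD⟧ * μ⟦u|m ⊔ mD⟧ := by
      rw [show t ∩ s = s ∩ t from Set.inter_comm t s]; exact hb
    filter_upwards [hb', hc1, hc2, hd] with ω e1 e2 e3 e4
    rw [Pi.mul_apply, e1, Pi.mul_apply, e2, e3, e4]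
    ring
  -- tower + pull-out
  have htow1 := condExp_condExp_of_le (μ := μ)
    (f := (s ∩ (t ∩ u)).indicator fun _ => (1:ℝ)) (le_sup_left : m ≤ m ⊔ mD) hm2'
  have htow2 := condExp_condExp_of_le (μ := μ)
    (f := (t ∩ u).indicator fun _ => (1:ℝ)) (le_sup_left : m ≤ m ⊔ mD) hm2'
  have hFsm : StronglyMeasurable[m] (μ⟦s|m⟧) := stronglyMeasurable_condExp
  have habs := condexp_indicator_abs_le_one hm μ s hsm
  have hint2 : Integrable (μ⟦t ∩ u|m ⊔ mD⟧) μ := integrable_condExp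
  have hprod_int : Integrable (μ⟦s|m⟧ * μ⟦t ∩ u|m ⊔ mD⟧) μ :=
    hint2.bdd_mul ((hFsm.mono hm).aestronglyMeasurable) habs
  have hpull := condExp_mul_of_stronglyMeasurable_left (μ := μ) hFsm hprod_int hint2
  calc μ⟦s ∩ (t ∩ u)|m⟧
      =ᵐ[μ] μ[μ⟦s ∩ (t ∩ u)|m ⊔ mD⟧|m] := htow1.symm
    _ =ᵐ[μ] μ[μ⟦s|m⟧ * μ⟦t ∩ u|m ⊔ mD⟧|m] := condExp_congr_ae hmid
    _ =ᵐ[μ] μ⟦s|m⟧ * μ[μ⟦t ∩ u|m ⊔ mD⟧|m] := hpull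
    _ =ᵐ[μ] fun ω => (μ⟦s|m⟧) ω * (μ⟦t ∩ u|m⟧) ω := by
        filter_upwards [htow2] with ω hω
        rw [Pi.mul_apply, hω]


lemma condexp_indicator_nonneg' (m : MeasurableSpace Ω) {mΩ : MeasurableSpace Ω}
    (μ : Measure Ω) (s : Set Ω) :
    0 ≤ᵐ[μ] μ⟦s|m⟧ :=
  condExp_nonneg (Filter.Eventually.of_forall (indicator_one_nonneg s))

lemma main_aux {m mY mD mR m2 : MeasurableSpace Ω} {mΩ : MeasurableSpace Ω}
    [StandardBorelSpace Ω] (hm : m ≤ mΩ) (hmY : mY ≤ mΩ) (hmD : mD ≤ mΩ) (hmR : mR ≤ mΩ)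
    (hm2eq : m2 = m ⊔ mD) (hm2 : m2 ≤ mΩ)
    (P : Measure Ω) [IsProbabilityMeasure P]
    (hCI1 : CondIndep m (m ⊔ mY) mD hm P)
    (hCI2 : CondIndep m2 (m2 ⊔ mY) mR hm2 P)
    {S A A' : Set Ω} (hS : MeasurableSet[m ⊔ mY] S)
    {tA uA tA' uA' : Set Ω}
    (htA : MeasurableSet[mD] tA) (huA : MeasurableSet[mR] uA) (hAeq : A = tA ∩ uA)
    (htA' : MeasurableSet[mD] tA') (huA' : MeasurableSet[mR] uA') (hA'eq : A' = tA' ∩ uA')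
    (hpos : P A ≠ 0)
    (hcondpos : ∀ᵐ ω ∂P, 0 < (P⟦A'|m⟧) ω) :
    (P[|A] S).toReal
      = ∫ ω, (MeasureTheory.condExp m (P[|A']) (Set.indicator S (fun _ => (1:ℝ)))) ω ∂(P[|A]) := by
  have hmY2 : m ⊔ mY ≤ mΩ := sup_le hm hmY
  have hSm : MeasurableSet S := hmY2 S hS
  have hAm : MeasurableSet A := hAeq ▸ (hmD tA htA).inter (hmR uA huA)
  have hA'm : MeasurableSet A' := hA'eq ▸ (hmD tA' htA').inter (hmR uA' huA')
  -- star facts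
  have star_A : P⟦S ∩ A|m⟧ =ᵐ[P] fun ω => (P⟦S|m⟧) ω * (P⟦A|m⟧) ω := by
    rw [hAeq]; exact star_lemma hm hmY hmD hmR hm2eq P hCI1 hCI2 hS htA huA
  have star_A' : P⟦S ∩ A'|m⟧ =ᵐ[P] fun ω => (P⟦S|m⟧) ω * (P⟦A'|m⟧) ω := by
    rw [hA'eq]; exact star_lemma hm hmY hmD hmR hm2eq P hCI1 hCI2 hS htA' huA'
  -- positivity of P A'
  have hpos' : P A' ≠ 0 := by
    intro h0
    have hz : (A'.indicator (fun _ => (1:ℝ))) =ᵐ[P] 0 := by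
      refine (ae_iff).mpr (measure_mono_null ?_ h0)
      intro ω hω
      by_contra h'
      exact hω (by simp [Set.indicator_of_notMem h'])
    have hz2 : P⟦A'|m⟧ =ᵐ[P] 0 := by
      have h3 := condExp_congr_ae (m := m) hz
      rwa [condExp_zero] at h3
    obtain ⟨ω, h1, h2⟩ := (hcondpos.and hz2).exists
    rw [h2] at h1
    exact lt_irrefl _ h1
  set ν := P[|A'] with hν
  haveI : IsProbabilityMeasure ν := cond_isProbabilityMeasure hpos'
  haveI : IsProbabilityMeasure (P[|A]) := cond_isProbabilityMeasure hpos
  set f : Ω → ℝ := P⟦S|m⟧ with hf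
  have hf_sm : StronglyMeasurable[m] f := stronglyMeasurable_condExp
  have hf_absle : ∀ᵐ ω ∂P, ‖f ω‖ ≤ 1 := condexp_indicator_abs_le_one hm P S hSm
  have hac : ν ≪ P := cond_absolutelyContinuous
  have hf_int_ν : Integrable f ν :=
    (integrable_const (1:ℝ)).mono' ((hf_sm.mono hm).aestronglyMeasurable)
      (hf_absle.filter_mono hac.ae_le)
  have hf_int_P : Integrable f P := integrable_condExp
  -- set-integral identity under ν
  have hTint : ∀ T, MeasurableSet[m] T → ν T < ⊤ →
      ∫ ω in T, f ω ∂ν = ∫ ω in T, S.indicator (fun _ => (1:ℝ)) ω ∂ν := by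
    intro T hT _
    have hTm : MeasurableSet T := hm T hT
    have hr : ∫ ω in T, S.indicator (fun _ => (1:ℝ)) ω ∂ν = (ν (S ∩ T)).toReal := by
      rw [integral_indicator_one'' (ν.restrict T) hSm, Measure.restrict_apply hSm]
    have l1 : ∫ ω in T, f ω ∂ν = ((P A')⁻¹).toReal * ∫ ω in T ∩ A', f ω ∂P := by
      show ∫ ω in T, f ω ∂((P A')⁻¹ • P.restrict A') = _
      rw [Measure.restrict_smul, integral_smul_measure, Measure.restrict_restrict hTm,
        smul_eq_mul]
    have l2 : ∫ ω in T ∩ A', f ω ∂P = ∫ ω in T, A'.indicator f ω ∂P := by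
      rw [Set.inter_comm, ← Measure.restrict_restrict hA'm, integral_indicator hA'm]
    have e' : f * (A'.indicator fun _ => (1:ℝ)) = A'.indicator f := mul_indicator_one_eq' f A'
    have l3 : ∫ ω in T, A'.indicator f ω ∂P = ∫ ω in T, (P⟦S ∩ A'|m⟧) ω ∂P := by
      rw [← setIntegral_condExp hm (hf_int_P.indicator hA'm) hT]
      refine integral_congr_ae (ae_restrict_of_ae ?_)
      have hmul := condExp_mul_of_stronglyMeasurable_left (μ := P) hf_sm
        (by rw [e']; exact hf_int_P.indicator hA'm) ((integrable_const _).indicator hA'm)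
      rw [e'] at hmul
      filter_upwards [hmul, star_A'] with ω h1 h2
      rw [h1, Pi.mul_apply, ← h2]
    have l4 : ∫ ω in T, (P⟦S ∩ A'|m⟧) ω ∂P = (P ((S ∩ A') ∩ T)).toReal := by
      rw [setIntegral_condExp hm ((integrable_const _).indicator (hSm.inter hA'm)) hT,
        integral_indicator_one'' (P.restrict T) (hSm.inter hA'm),
        Measure.restrict_apply (hSm.inter hA'm)]
    have hr2 : (ν (S ∩ T)).toReal = ((P A')⁻¹).toReal * (P ((S ∩ A') ∩ T)).toReal := by
      have hseteq : A' ∩ (S ∩ T) = (S ∩ A') ∩ T := by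
        ext ω; simp only [Set.mem_inter_iff]; tauto
      rw [hν, cond_apply hA'm P (S ∩ T), hseteq, ENNReal.toReal_mul]
    rw [hr, hr2, l1, l2, l3, l4]
  set G : Ω → ℝ := MeasureTheory.condExp m ν (Set.indicator S (fun _ => (1:ℝ))) with hG
  have hgf_ν : G =ᵐ[ν] f :=
    ((ae_eq_condExp_of_forall_setIntegral_eq hm ((integrable_const (1:ℝ)).indicator hSm)
      (fun _ _ _ => hf_int_ν.integrableOn) hTint hf_sm.aestronglyMeasurable)).symm
  -- transfer to P-a.e.
  have hG_sm : StronglyMeasurable[m] G := stronglyMeasurable_condExp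
  have hNmeq : MeasurableSet[m] {ω | G ω = f ω} := measurableSet_eq_fun hG_sm.measurable hf_sm.measurable
  have hN : MeasurableSet[m] {ω | ¬ (G ω = f ω)} := by
    have := hNmeq.compl
    rwa [Set.compl_setOf] at this
  have hgf_P : G =ᵐ[P] f := by
    set N := {ω | ¬ (G ω = f ω)} with hNdef
    have hNm : MeasurableSet N := hm _ hN
    have hνN : ν N = 0 := ae_iff.mp hgf_ν
    have h1 : P (A' ∩ N) = 0 := by
      have hca := cond_apply hA'm P N
      rw [hνN] at hca
      rcases mul_eq_zero.mp hca.symm with h | h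
      · exact absurd h (by simp [ENNReal.inv_eq_zero, measure_ne_top P A'])
      · exact h
    have h3 : ∫ ω in N, (P⟦A'|m⟧) ω ∂P = 0 := by
      rw [setIntegral_condExp hm ((integrable_const _).indicator hA'm) hN,
        integral_indicator_one'' (P.restrict N) hA'm, Measure.restrict_apply hA'm, h1]
      simp
    have h4 := (integral_eq_zero_iff_of_nonneg_ae
      (ae_restrict_of_ae (condexp_indicator_nonneg' m P A'))
      integrable_condExp.integrableOn).mp h3
    have h5 : ∀ᵐ ω ∂(P.restrict N), False := by
      filter_upwards [h4, ae_restrict_of_ae hcondpos] with ω h0 hp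
      rw [Pi.zero_apply] at h0
      rw [h0] at hp
      exact lt_irrefl _ hp
    have h6 : P.restrict N = 0 := ae_eq_bot.mp (Filter.eventually_false_iff_eq_bot.mp h5)
    have h7 : P N = 0 := by
      rw [← Measure.restrict_apply_self, h6]; rfl
    exact (ae_iff).mpr h7
  -- final computation
  have r1 : ∫ ω, G ω ∂(P[|A]) = ∫ ω, f ω ∂(P[|A]) :=
    integral_congr_ae (hgf_P.filter_mono (cond_absolutelyContinuous).ae_le)
  have r2 : ∫ ω, f ω ∂(P[|A]) = ((P A)⁻¹).toReal * ∫ ω in A, f ω ∂P := by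
    show ∫ ω, f ω ∂((P A)⁻¹ • P.restrict A) = _
    rw [integral_smul_measure, smul_eq_mul]
  have e' : f * (A.indicator fun _ => (1:ℝ)) = A.indicator f := mul_indicator_one_eq' f A
  have r3 : ∫ ω in A, f ω ∂P = (P (S ∩ A)).toReal := by
    rw [← integral_indicator hAm, ← integral_condExp hm (μ := P) (f := A.indicator f)]
    have hmul := condExp_mul_of_stronglyMeasurable_left (μ := P) hf_sm
      (by rw [e']; exact hf_int_P.indicator hAm) ((integrable_const _).indicator hAm)
    rw [e'] at hmul
    have hcongr : MeasureTheory.condExp m P (A.indicator f) =ᵐ[P] P⟦S ∩ A|m⟧ := by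
      filter_upwards [hmul, star_A] with ω h1 h2
      rw [h1, Pi.mul_apply, ← h2]
    rw [integral_congr_ae hcongr, integral_condExp hm (μ := P),
      integral_indicator_one'' P (hSm.inter hAm)]
  rw [r1, r2, r3, cond_apply hAm P S, ENNReal.toReal_mul, Set.inter_comm A S]

end Aux

/-- Under unconfoundedness (Assumption 1) and MAR (Assumption 2), for each
`d ∈ {0,1}`, assuming `P(D = 1−d, R = 1) > 0` and `P(D = d, R = 1 | X) > 0` almost surely,
for every `η ∈ ℝ`:
`P(V_d < η | D = 1−d, R = 1) = E[ P(V_d < η | X, D = d, R = 1) | D = 1−d, R = 1 ]`.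
In particular, if `η` is such that the right-hand side equals `1 − α`, then
`P(V_d < η | D = 1−d, R = 1) = 1 − α`. -/
theorem stmt_0
    {Ω : Type*} [mΩ : MeasurableSpace Ω] [StandardBorelSpace Ω]
    (P : Measure Ω) [IsProbabilityMeasure P]
    {k : ℕ} (X : Ω → (Fin k → ℝ)) (Y1 Y0 D R : Ω → ℝ)
    (hX : Measurable X) (hY1 : Measurable Y1) (hY0 : Measurable Y0)
    (hD : Measurable D) (hR : Measurable R)
    (hDbin : ∀ ω, D ω = 0 ∨ D ω = 1) (hRbin : ∀ ω, R ω = 0 ∨ R ω = 1)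
    -- Assumption 1 (unconfoundedness): (Y(1), Y(0)) ⟂ D | X
    (hA1 : CondIndepFun (MeasurableSpace.comap X inferInstance) hX.comap_le
      (fun ω => (Y1 ω, Y0 ω)) D P)
    -- Assumption 2 (MAR): (Y(1), Y(0)) ⟂ R | (X, D)
    (hA2 : CondIndepFun (MeasurableSpace.comap (fun ω => (X ω, D ω)) inferInstance)
      (Measurable.comap_le (hX.prodMk hD))
      (fun ω => (Y1 ω, Y0 ω)) R P)
    (d : ℝ) (hd : d = 0 ∨ d = 1)
    -- nonconformity score V_d = v_d(X, Y(d))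
    (v : (Fin k → ℝ) × ℝ → ℝ) (hv : Measurable v)
    (V : Ω → ℝ) (hV : V = fun ω => v (X ω, if d = 1 then Y1 ω else Y0 ω))
    -- P(D = 1 − d, R = 1) > 0
    (hpos : 0 < P {ω | D ω = 1 - d ∧ R ω = 1})
    -- P(D = d, R = 1 | X) > 0 almost surely
    (hcondpos : ∀ᵐ ω ∂P,
      0 < MeasureTheory.condExp (MeasurableSpace.comap X inferInstance) P
        (Set.indicator {ω' | D ω' = d ∧ R ω' = 1} (fun _ => (1 : ℝ))) ω)
    (η : ℝ) :
    (P[|{ω | D ω = 1 - d ∧ R ω = 1}] {ω | V ω < η}).toReal =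
      ∫ ω, (MeasureTheory.condExp (MeasurableSpace.comap X inferInstance)
          (P[|{ω' | D ω' = d ∧ R ω' = 1}])
          (Set.indicator {ω' | V ω' < η} (fun _ => (1 : ℝ)))) ω
        ∂(P[|{ω' | D ω' = 1 - d ∧ R ω' = 1}])
    ∧ ∀ α : ℝ,
      (∫ ω, (MeasureTheory.condExp (MeasurableSpace.comap X inferInstance)
          (P[|{ω' | D ω' = d ∧ R ω' = 1}])
          (Set.indicator {ω' | V ω' < η} (fun _ => (1 : ℝ)))) ω
        ∂(P[|{ω' | D ω' = 1 - d ∧ R ω' = 1}])) = 1 - α →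
      (P[|{ω | D ω = 1 - d ∧ R ω = 1}] {ω | V ω < η}).toReal = 1 - α := by
  have hm : MeasurableSpace.comap X inferInstance ≤ mΩ := hX.comap_le
  have hmY : MeasurableSpace.comap (fun ω => (Y1 ω, Y0 ω)) inferInstance ≤ mΩ :=
    (hY1.prodMk hY0).comap_le
  have hmD : MeasurableSpace.comap D inferInstance ≤ mΩ := hD.comap_le
  have hmR : MeasurableSpace.comap R inferInstance ≤ mΩ := hR.comap_le
  have hm2 : MeasurableSpace.comap (fun ω => (X ω, D ω)) inferInstance ≤ mΩ :=
    (hX.prodMk hD).comap_le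
  have hm2eq : MeasurableSpace.comap (fun ω => (X ω, D ω)) inferInstance
      = MeasurableSpace.comap X inferInstance ⊔ MeasurableSpace.comap D inferInstance :=
    comap_pair_eq X D
  -- conditional independence facts
  have hCI1 : CondIndep (MeasurableSpace.comap X inferInstance)
      (MeasurableSpace.comap X inferInstance ⊔ MeasurableSpace.comap (fun ω => (Y1 ω, Y0 ω)) inferInstance)
      (MeasurableSpace.comap D inferInstance) hm P :=
    CondIndep.sup_left' hmY hmD ((condIndepFun_iff_condIndep _ _ _ _ P).mp hA1)
  have hCI2 : CondIndep (MeasurableSpace.comap (fun ω => (X ω, D ω)) inferInstance)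
      (MeasurableSpace.comap (fun ω => (X ω, D ω)) inferInstance ⊔ MeasurableSpace.comap (fun ω => (Y1 ω, Y0 ω)) inferInstance)
      (MeasurableSpace.comap R inferInstance) hm2 P :=
    CondIndep.sup_left' hmY hmR ((condIndepFun_iff_condIndep _ _ _ _ P).mp hA2)
  -- measurability of S
  have hproj : Measurable (fun p : (Fin k → ℝ) × (ℝ × ℝ) => if d = 1 then p.2.1 else p.2.2) := by
    by_cases hd1 : d = 1
    · simp only [hd1, ↓reduceIte]; exact measurable_fst.comp measurable_snd
    · simp only [hd1, ↓reduceIte]; exact measurable_snd.comp measurable_snd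
  have hS : MeasurableSet[MeasurableSpace.comap X inferInstance
      ⊔ MeasurableSpace.comap (fun ω => (Y1 ω, Y0 ω)) inferInstance] {ω | V ω < η} := by
    rw [← comap_pair_eq X (fun ω => (Y1 ω, Y0 ω))]
    refine ⟨{p : (Fin k → ℝ) × (ℝ × ℝ) | v (p.1, if d = 1 then p.2.1 else p.2.2) < η}, ?_, ?_⟩
    · exact measurableSet_lt (hv.comp (measurable_fst.prodMk hproj)) measurable_const
    · ext ω
      simp [hV]
  -- set decompositions
  have hAeq : {ω | D ω = 1 - d ∧ R ω = 1} = D ⁻¹' {1 - d} ∩ R ⁻¹' {1} := by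
    ext ω; simp [Set.mem_inter_iff]
  have hA'eq : {ω | D ω = d ∧ R ω = 1} = D ⁻¹' {d} ∩ R ⁻¹' {1} := by
    ext ω; simp [Set.mem_inter_iff]
  have htA : MeasurableSet[MeasurableSpace.comap D inferInstance] (D ⁻¹' {1 - d}) :=
    ⟨{1 - d}, measurableSet_singleton _, rfl⟩
  have htA' : MeasurableSet[MeasurableSpace.comap D inferInstance] (D ⁻¹' {d}) :=
    ⟨{d}, measurableSet_singleton _, rfl⟩
  have huA : MeasurableSet[MeasurableSpace.comap R inferInstance] (R ⁻¹' {1}) :=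
    ⟨{1}, measurableSet_singleton _, rfl⟩
  have hmain := main_aux hm hmY hmD hmR hm2eq hm2 P hCI1 hCI2 hS htA huA hAeq htA' huA hA'eq
    hpos.ne' hcondpos
  exact ⟨hmain, fun α hα => hmain.trans hα⟩
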